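/- arXiv:2602.15548 — 11 statements merged into one kernel-verified Lean document; each statement's English description precedes it below -/
import Mathlib

section
/- Let F : ℝ × ℝ → ℝ be translative, i.e., F(x+z, y+z) = F(x,y) + z for all x,y,z ∈ ℝ, and define f(x) := F(x,0). Then F is weakly associative (F(F(x,y),x) = F(x,F(y,x)) for all x,y ∈ ℝ) if and only if f satisfies f(f(-x)+x) = f(-f(x)) + f(x) for all x ∈ ℝ. -/
theorem stmt1 (F : ℝ × ℝ → ℝ) (htr : ∀ x y z : ℝ, F (x + z, y + z) = F (x, y) + z)
    (f : ℝ → ℝ) (hf : ∀ x, f x = F (x, 0)) :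
    (∀ x y : ℝ, F (F (x, y), x) = F (x, F (y, x))) ↔
      (∀ x : ℝ, f (f (-x) + x) = f (-f x) + f x) := by
  have key : ∀ a b : ℝ, F (a, b) = f (a - b) + b := by
    intro a b
    have := htr (a - b) 0 b
    simp only [hf, sub_add_cancel, zero_add] at this ⊢
    linarith [this]
  constructor
  · intro h t
    have := h 0 t
    simp only [key, zero_sub, sub_zero, add_zero] at this
    linarith [this]
  · intro h x y
    have ht := h (y - x)
    simp only [key]
    have e1 : x - y = -(y - x) := by ring
    rw [e1]
    have e3 : f (-(y - x)) + y - x = f (-(y - x)) + (y - x) := by ring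
    rw [e3]
    have e4 : x - (f (y - x) + x) = -f (y - x) := by ring
    rw [e4, ht]
    ring
end

section
/- Let a ∈ ℝ and f : ℝ → ℝ with f(x) = a·x for x ≤ 0 and 0 ≤ f(x) ≤ x for x ≥ 0. If f satisfies f(f(-x)+x) = f(-f(x)) + f(x) for all x ∈ ℝ, then f(a·x) = a·f(x) for all x ≥ 0. -/
theorem stmt5 (a : ℝ) (f : ℝ → ℝ) (hneg : ∀ x : ℝ, x ≤ 0 → f x = a * x)
    (hpos : ∀ x : ℝ, 0 ≤ x → 0 ≤ f x ∧ f x ≤ x)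
    (hfe : ∀ x : ℝ, f (f (-x) + x) = f (-f x) + f x) :
    ∀ x : ℝ, 0 ≤ x → f (a * x) = a * f x := by
  intro x hx
  have h1 := hfe (-x)
  rw [neg_neg] at h1
  have hfx := hpos x hx
  have h2 : f (f x + -x) = a * (f x + -x) := hneg _ (by linarith [hfx.2])
  have h3 : f (-x) = a * (-x) := hneg _ (by linarith)
  rw [h2, h3] at h1
  have h4 : -(a * -x) = a * x := by ring
  rw [h4] at h1
  nlinarith [h1]
end

section
/- Let a ∈ ℝ and f : ℝ → ℝ with f(x) = a·x for x ≤ 0 and 0 ≤ f(x) ≤ x for x ≥ 0. If f satisfies f(f(-x)+x) = f(-f(x)) + f(x) for all x ∈ ℝ, then f((1-a)·x) = (1-a)·f(x) for all x ≥ 0. -/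
theorem stmt6 (a : ℝ) (f : ℝ → ℝ) (hneg : ∀ x : ℝ, x ≤ 0 → f x = a * x)
    (hpos : ∀ x : ℝ, 0 ≤ x → 0 ≤ f x ∧ f x ≤ x)
    (hfe : ∀ x : ℝ, f (f (-x) + x) = f (-f x) + f x) :
    ∀ x : ℝ, 0 ≤ x → f ((1 - a) * x) = (1 - a) * f x := by
  intro x hx
  have h1 := hfe x
  rw [hneg (-x) (by linarith)] at h1
  rw [hneg (-(f x)) (by linarith [(hpos x hx).1])] at h1
  have : a * -x + x = (1 - a) * x := by ring
  rw [this] at h1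
  rw [h1]; ring
end

section
/- Let a ∈ ℝ and f : ℝ → ℝ with f(x) = a·x for x ≤ 0 and 0 ≤ f(x) ≤ x for x ≥ 0. If f(a·x) = a·f(x) and f((1-a)·x) = (1-a)·f(x) hold for all x ≥ 0, then f satisfies f(f(-x)+x) = f(-f(x)) + f(x) for all x ∈ ℝ. -/
theorem stmt7 (a : ℝ) (f : ℝ → ℝ) (hneg : ∀ x : ℝ, x ≤ 0 → f x = a * x)
    (hpos : ∀ x : ℝ, 0 ≤ x → 0 ≤ f x ∧ f x ≤ x)
    (ha : ∀ x : ℝ, 0 ≤ x → f (a * x) = a * f x)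
    (h1a : ∀ x : ℝ, 0 ≤ x → f ((1 - a) * x) = (1 - a) * f x) :
    ∀ x : ℝ, f (f (-x) + x) = f (-f x) + f x := by
  intro x
  rcases le_or_gt 0 x with hx | hx
  · have h1 : f (-x) = a * (-x) := hneg _ (by linarith)
    have hfx := (hpos x hx).1
    have h2 : f (-f x) = a * (-f x) := hneg _ (by linarith)
    rw [h1, h2]
    have e : a * (-x) + x = (1 - a) * x := by ring
    rw [e, h1a x hx]; ring
  · have hx' : 0 ≤ -x := by linarith
    have hfnx := (hpos _ hx').2
    have h1 : f (f (-x) + x) = a * (f (-x) + x) := hneg _ (by linarith)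
    have h2 : f x = a * x := hneg _ hx.le
    have h3 : f (a * -x) = a * f (-x) := ha _ hx'
    rw [h1, h2]
    have e : -(a * x) = a * -x := by ring
    rw [e, h3]; ring
end

section
/- Let g : ℝ → ℝ satisfy min(x,0) ≤ g(x) ≤ max(x,0) for all x ∈ ℝ. Define f : ℝ → ℝ by f(x) = 0 for x ≤ 0 and f(x) = g(x) for x > 0. Then f satisfies f(f(-x)+x) = f(-f(x)) + f(x) for all x ∈ ℝ. -/
theorem stmt8 (g : ℝ → ℝ) (hbt : ∀ x : ℝ, min x 0 ≤ g x ∧ g x ≤ max x 0)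
    (f : ℝ → ℝ) (hf : ∀ x : ℝ, f x = if x ≤ 0 then 0 else g x) :
    ∀ x : ℝ, f (f (-x) + x) = f (-f x) + f x := by
  intro x
  rcases le_or_gt x 0 with hx | hx
  · have hfx : f x = 0 := by rw [hf x, if_pos hx]
    have h0 : f 0 = 0 := by rw [hf 0, if_pos le_rfl]
    rcases eq_or_lt_of_le hx with h | h
    · simp [h, hfx, h0]
    · have hnx : ¬ (-x ≤ 0) := by linarith
      have : f (-x) = g (-x) := by rw [hf (-x), if_neg hnx]
      have hub := (hbt (-x)).2
      have : f (-x) + x ≤ 0 := by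
        rw [this]
        have : max (-x) 0 = -x := max_eq_left (by linarith)
        linarith [hub.trans_eq this]
      rw [hf (f (-x) + x), if_pos this, hfx, neg_zero, h0]
      ring
  · have hfx : f x = g x := by rw [hf x, if_neg (not_le.mpr hx)]
    have hlb := (hbt x).1
    have hg0 : 0 ≤ g x := by
      have : min x 0 = 0 := min_eq_right hx.le
      linarith
    have hfnx : f (-x) = 0 := by rw [hf (-x), if_pos (by linarith)]
    have hfng : f (-f x) = 0 := by rw [hf (-f x), if_pos (by rw [hfx]; linarith)]
    rw [hfnx, zero_add, hfx, ← hfx, hfng, zero_add, hfx]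
end

section
/- Let g : ℝ → ℝ satisfy min(x,0) ≤ g(x) ≤ max(x,0) for all x ∈ ℝ and be continuous on [0,∞). Then the function f defined by f(x) = 0 for x ≤ 0 and f(x) = g(x) for x > 0 is continuous on ℝ and satisfies f(f(-x)+x) = f(-f(x)) + f(x) for all x ∈ ℝ. -/
theorem stmt10 (g : ℝ → ℝ) (hbt : ∀ x : ℝ, min x 0 ≤ g x ∧ g x ≤ max x 0)
    (hcont : ContinuousOn g (Set.Ici (0 : ℝ)))
    (f : ℝ → ℝ) (hf : ∀ x : ℝ, f x = if x ≤ 0 then 0 else g x) :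
    Continuous f ∧ ∀ x : ℝ, f (f (-x) + x) = f (-f x) + f x := by
  have hg0 : g 0 = 0 := by
    have h := hbt 0; simp at h; linarith [h.1, h.2]
  have hfe : f = g ∘ fun x => max x 0 := by
    funext x
    rw [hf x]
    by_cases hx : x ≤ 0
    · simp [hx, max_eq_right hx, hg0]
    · simp [hx, max_eq_left (le_of_not_ge hx)]
  have hnn : ∀ x, 0 ≤ f x := by
    intro x
    rw [hf x]
    by_cases hx : x ≤ 0
    · simp [hx]
    · simp only [hx, if_false]
      have := (hbt x).1
      have : min x 0 = 0 := min_eq_right (le_of_not_ge hx)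
      linarith [(hbt x).1]
  have hub : ∀ x, f x ≤ max x 0 := by
    intro x
    rw [hf x]
    by_cases hx : x ≤ 0
    · simp [hx, le_max_right]
    · simp only [hx, if_false]; exact (hbt x).2
  constructor
  · rw [hfe]
    exact hcont.comp_continuous (continuous_id.max continuous_const)
      (fun x => le_max_right x 0)
  · intro x
    have hRHS : f (-f x) = 0 := by
      rw [hf]; simp [neg_nonpos.mpr (hnn x)]
    rw [hRHS, zero_add]
    rcases le_or_gt x 0 with hx | hx
    · have hfx : f x = 0 := by rw [hf]; simp [hx]
      have h1 : f (-x) + x ≤ 0 := by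
        have := hub (-x)
        have hmax : max (-x) 0 = -x := max_eq_left (by linarith)
        linarith [hub (-x), hmax ▸ hub (-x)]
      rw [hfx]
      rw [hf (f (-x) + x)]
      simp [h1]
    · have : f (-x) = 0 := by rw [hf]; simp [neg_nonpos.mpr hx.le]
      rw [this, zero_add]
end

section
/- There exists a continuous function f : ℝ → ℝ satisfying f(f(-x)+x) = f(-f(x)) + f(x) for all x ∈ ℝ that is not of the form f(x) = a·x for x ≤ 0 and f(x) = b·x for x > 0 for any constants a, b ∈ ℝ. (Hence Matkowski's conjecture on the continuous solutions of this equation is false.) -/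
theorem stmt11 : ∃ f : ℝ → ℝ, Continuous f ∧
    (∀ x : ℝ, f (f (-x) + x) = f (-f x) + f x) ∧
    ¬ ∃ a b : ℝ, (∀ x : ℝ, x ≤ 0 → f x = a * x) ∧ (∀ x : ℝ, 0 < x → f x = b * x) := by
  refine ⟨fun x => max x (-1), continuous_id.max continuous_const, ?_, ?_⟩
  · intro x
    simp only [max_def]
    split_ifs <;> linarith
  · rintro ⟨a, b, h1, h2⟩
    have e1 := h1 (-1) (by norm_num)
    have e2 := h1 (-2) (by norm_num)
    simp only [max_def] at e1 e2
    norm_num at e1 e2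
    linarith
end

section
/- Let γ ≠ 0, λ ∈ ℝ \ {0}, and suppose ln|λ| = k·γ for some integer k. Let h : ℝ → ℝ be periodic with period γ. Define g : ℝ → ℝ by g(x) = x·h(ln|x|) for x ≠ 0 and g(0) = 0. Then g(λ·x) = λ·g(x) for all x ∈ ℝ. -/
theorem stmt15 (γ : ℝ) (hγ : γ ≠ 0) (lam : ℝ) (hlam : lam ≠ 0)
    (k : ℤ) (hk : Real.log |lam| = k * γ)
    (h : ℝ → ℝ) (hper : Function.Periodic h γ)
    (g : ℝ → ℝ) (hg : ∀ x : ℝ, g x = if x = 0 then 0 else x * h (Real.log |x|)) :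
    ∀ x : ℝ, g (lam * x) = lam * g x := by
  intro x
  rcases eq_or_ne x 0 with rfl | hx
  · simp [hg]
  · have hlx : lam * x ≠ 0 := mul_ne_zero hlam hx
    rw [hg, hg, if_neg hlx, if_neg hx]
    have : Real.log |lam * x| = Real.log |x| + (k : ℝ) * γ := by
      rw [abs_mul, Real.log_mul (abs_ne_zero.mpr hlam) (abs_ne_zero.mpr hx), hk]
      ring
    rw [this, (hper.int_mul k) (Real.log |x|)]
    ring
end

section
/- Let a ∈ (0,1) with ln a / ln(1-a) rational. Then there exists a continuous function f : ℝ → ℝ satisfying f(f(-x)+x) = f(-f(x)) + f(x) for all x ∈ ℝ, satisfying the bow-tie condition min(x,0) ≤ f(x) ≤ max(x,0), with f(x) = a·x for all x ≤ 0, such that f is not linear on [0,∞), i.e., there is no b ∈ ℝ with f(x) = b·x for all x ≥ 0. -/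
open Real

theorem stmt16 (a : ℝ) (ha : a ∈ Set.Ioo (0 : ℝ) 1)
    (hrat : ∃ q : ℚ, Real.log a / Real.log (1 - a) = (q : ℝ)) :
    ∃ f : ℝ → ℝ, Continuous f ∧
      (∀ x : ℝ, f (f (-x) + x) = f (-f x) + f x) ∧
      (∀ x : ℝ, min x 0 ≤ f x ∧ f x ≤ max x 0) ∧
      (∀ x : ℝ, x ≤ 0 → f x = a * x) ∧
      ¬ ∃ b : ℝ, ∀ x : ℝ, 0 ≤ x → f x = b * x := by
  obtain ⟨ha0, ha1⟩ := ha
  obtain ⟨q, hq⟩ := hrat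
  have h1a0 : (0:ℝ) < 1 - a := by linarith
  have h1a1 : 1 - a < 1 := by linarith
  have hla : Real.log a < 0 := Real.log_neg ha0 ha1
  have hl1a : Real.log (1 - a) < 0 := Real.log_neg h1a0 h1a1
  have hq' : Real.log a = (q : ℝ) * Real.log (1 - a) := by
    rw [div_eq_iff (ne_of_lt hl1a)] at hq
    linarith [hq]
  have hqpos : (0:ℝ) < (q : ℝ) := by
    rw [← hq]
    exact div_pos_of_neg_of_neg hla hl1a
  set L : ℝ := Real.log (1 - a) / (q.den : ℝ) with hLdef
  have hden : (0:ℝ) < (q.den : ℝ) := by exact_mod_cast q.pos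
  have hL : L < 0 := div_neg_of_neg_of_pos hl1a hden
  have hLne : L ≠ 0 := ne_of_lt hL
  have hlog1a : Real.log (1 - a) = ((q.den : ℤ) : ℝ) * L := by
    rw [hLdef]
    push_cast
    field_simp
  have hloga : Real.log a = ((q.num : ℤ) : ℝ) * L := by
    rw [hq', Rat.cast_def, hLdef]
    field_simp
  set h : ℝ → ℝ := fun x => (2 + Real.sin (2 * π * Real.log x / L)) / 4 with hhdef
  have hbnd : ∀ x : ℝ, 1/4 ≤ h x ∧ h x ≤ 3/4 := by
    intro x
    have h1 := Real.neg_one_le_sin (2 * π * Real.log x / L)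
    have h2 := Real.sin_le_one (2 * π * Real.log x / L)
    constructor <;> simp only [hhdef] <;> linarith
  -- periodicity of h under scaling by k with log k = j * L
  have hper : ∀ (k : ℝ) (j : ℤ), 0 < k → Real.log k = (j : ℝ) * L →
      ∀ x : ℝ, 0 < x → h (k * x) = h x := by
    intro k j hk hlk x hx
    simp only [hhdef]
    rw [Real.log_mul (ne_of_gt hk) (ne_of_gt hx), hlk]
    have : 2 * π * ((j : ℝ) * L + Real.log x) / L
        = 2 * π * Real.log x / L + (j : ℝ) * (2 * π) := by
      field_simp
      ring
    rw [this, Real.sin_add_int_mul_two_pi]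
  have hpa : ∀ x : ℝ, 0 < x → h (a * x) = h x := fun x hx =>
    hper a q.num ha0 hloga x hx
  have hp1a : ∀ x : ℝ, 0 < x → h ((1 - a) * x) = h x := fun x hx =>
    hper (1 - a) (q.den : ℤ) h1a0 hlog1a x hx
  set f : ℝ → ℝ := fun x => if x ≤ 0 then a * x else x * h x with hfdef
  have hf0 : f 0 = 0 := by simp [hfdef]
  have hfneg : ∀ x : ℝ, x ≤ 0 → f x = a * x := by
    intro x hx; simp [hfdef, hx]
  have hfpos : ∀ x : ℝ, 0 < x → f x = x * h x := by
    intro x hx; simp [hfdef, not_le.mpr hx]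
  -- bounds on f for positive x
  have hfpb : ∀ x : ℝ, 0 < x → 0 < f x ∧ f x < x := by
    intro x hx
    rw [hfpos x hx]
    obtain ⟨hb1, hb2⟩ := hbnd x
    constructor
    · positivity
    · nlinarith
  -- scaling for positive x
  have hscale_a : ∀ x : ℝ, 0 < x → f (a * x) = a * f x := by
    intro x hx
    rw [hfpos x hx, hfpos (a * x) (by positivity), hpa x hx]; ring
  have hscale_1a : ∀ x : ℝ, 0 < x → f ((1 - a) * x) = (1 - a) * f x := by
    intro x hx
    rw [hfpos x hx, hfpos ((1 - a) * x) (by positivity), hp1a x hx]; ring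
  refine ⟨f, ?_, ?_, ?_, hfneg, ?_⟩
  · -- continuity
    rw [continuous_iff_continuousAt]
    intro x
    rcases lt_trichotomy x 0 with hx | hx | hx
    · have hev : f =ᶠ[nhds x] (fun y => a * y) := by
        filter_upwards [eventually_lt_nhds hx] with y hy
        exact hfneg y (le_of_lt hy)
      exact ContinuousAt.congr (continuousAt_const.mul continuousAt_id) hev.symm
    · -- at 0: squeeze
      subst hx
      have hb : ∀ y : ℝ, ‖f y‖ ≤ ‖y‖ := by
        intro y
        rcases le_or_gt y 0 with hy | hy
        · rw [hfneg y hy]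
          rw [Real.norm_eq_abs, Real.norm_eq_abs, abs_mul, abs_of_pos ha0]
          nlinarith [abs_nonneg y]
        · obtain ⟨h1, h2⟩ := hfpb y hy
          rw [Real.norm_eq_abs, Real.norm_eq_abs, abs_of_pos h1, abs_of_pos hy]
          linarith
      have : Filter.Tendsto f (nhds 0) (nhds 0) := by
        apply squeeze_zero_norm hb
        exact tendsto_norm_zero
      unfold ContinuousAt
      rwa [hf0]
    · have hev : f =ᶠ[nhds x] (fun y => y * ((2 + Real.sin (2 * π * Real.log y / L)) / 4)) := by
        filter_upwards [eventually_gt_nhds hx] with y hy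
        rw [hfpos y hy]
      have hc : ContinuousAt (fun y : ℝ => y * ((2 + Real.sin (2 * π * Real.log y / L)) / 4)) x := by
        apply ContinuousAt.mul continuousAt_id
        apply ContinuousAt.div_const
        apply ContinuousAt.add continuousAt_const
        exact Real.continuous_sin.continuousAt.comp
          (((continuousAt_const.mul (Real.continuousAt_log (ne_of_gt hx)))).div_const _)
      exact ContinuousAt.congr hc hev.symm
  · -- functional equation
    intro x
    rcases le_or_gt x 0 with hx | hx
    · rcases eq_or_lt_of_le hx with rfl | hx'
      · simp [hf0]
      · -- x < 0
        have hnx : 0 < -x := by linarith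
        have hfnx := hfpb (-x) hnx
        have h1 : f (-x) + x < 0 := by linarith [hfnx.2]
        have h2 : f x = a * x := hfneg x hx
        have h3 : -f x = a * (-x) := by rw [h2]; ring
        calc f (f (-x) + x) = a * (f (-x) + x) := hfneg _ (le_of_lt h1)
          _ = a * f (-x) + a * x := by ring
          _ = f (a * (-x)) + f x := by rw [hscale_a (-x) hnx, h2]
          _ = f (-f x) + f x := by rw [h3]
    · -- x > 0
      have hfx := hfpb x hx
      have h1 : f (-x) = a * (-x) := hfneg (-x) (by linarith)
      have h2 : f (-x) + x = (1 - a) * x := by rw [h1]; ring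
      have h3 : f (-f x) = a * (-f x) := hfneg _ (by linarith [hfx.1])
      rw [h2, hscale_1a x hx, h3]; ring
  · -- bow-tie
    intro x
    rcases le_or_gt x 0 with hx | hx
    · rw [hfneg x hx, min_eq_left hx, max_eq_right hx]
      constructor <;> nlinarith
    · obtain ⟨h1, h2⟩ := hfpb x hx
      rw [min_eq_right (le_of_lt hx), max_eq_left (le_of_lt hx)]
      constructor <;> linarith
  · -- nonlinearity
    rintro ⟨b, hb⟩
    have e1 : f 1 = 1/2 := by
      rw [hfpos 1 one_pos]
      simp [hhdef, Real.log_one]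
      norm_num
    have hb1 : b = 1/2 := by
      have := hb 1 (by norm_num)
      rw [e1] at this
      linarith
    set x0 : ℝ := Real.exp (L / 4) with hx0def
    have hx0pos : 0 < x0 := Real.exp_pos _
    have hlx0 : Real.log x0 = L / 4 := Real.log_exp _
    have e2 : f x0 = x0 * (3/4) := by
      rw [hfpos x0 hx0pos]
      simp only [hhdef, hlx0]
      have : 2 * π * (L / 4) / L = π / 2 := by field_simp; ring
      rw [this, Real.sin_pi_div_two]
      norm_num
    have := hb x0 (le_of_lt hx0pos)
    rw [e2, hb1] at this
    nlinarith [hx0pos]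
end

section
/- Let f : ℝ → ℝ be continuous and λ-homogeneous on [0,∞) (f(λx) = λ f(x) for all x ≥ 0) for both λ = a and λ = 1-a, where a ∈ (0,1) and ln a / ln(1-a) is irrational. Then there exists b ∈ ℝ such that f(x) = b·x for all x ≥ 0. -/
theorem stmt18 (a : ℝ) (ha : a ∈ Set.Ioo (0 : ℝ) 1)
    (hirr : Irrational (Real.log a / Real.log (1 - a)))
    (f : ℝ → ℝ) (hc : Continuous f)
    (h1 : ∀ x : ℝ, 0 ≤ x → f (a * x) = a * f x)
    (h2 : ∀ x : ℝ, 0 ≤ x → f ((1 - a) * x) = (1 - a) * f x) :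
    ∃ b : ℝ, ∀ x : ℝ, 0 ≤ x → f x = b * x := by
  obtain ⟨ha0, ha1⟩ := ha
  have hb0 : (0:ℝ) < 1 - a := by linarith
  have hla : Real.log a ≠ 0 := by
    have := Real.log_neg ha0 ha1; linarith
  have hlb : Real.log (1 - a) ≠ 0 := by
    have := Real.log_neg hb0 (by linarith); linarith
  -- the auxiliary function
  set h : ℝ → ℝ := fun t => f (Real.exp t) * Real.exp (-t) - f 1 with hh
  have hhc : Continuous h := by
    exact ((hc.comp Real.continuous_exp).mul (Real.continuous_exp.comp continuous_neg)).sub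
      continuous_const
  have hper : ∀ c : ℝ, 0 < c → (∀ x : ℝ, 0 ≤ x → f (c * x) = c * f x) →
      ∀ t, h (t + Real.log c) = h t := by
    intro c hc0 hf t
    have e1 : Real.exp (t + Real.log c) = c * Real.exp t := by
      rw [Real.exp_add, Real.exp_log hc0]; ring
    simp only [hh]
    rw [e1, hf _ (Real.exp_nonneg t), neg_add, Real.exp_add, Real.exp_neg, Real.exp_neg,
      Real.exp_log hc0]
    have := Real.exp_ne_zero t
    have := ne_of_gt hc0
    field_simp
  have hper_a : ∀ t, h (t + Real.log a) = h t := hper a ha0 h1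
  have hper_b : ∀ t, h (t + Real.log (1 - a)) = h t := hper (1 - a) hb0 h2
  -- subgroup of periods
  set S : AddSubgroup ℝ := AddSubgroup.closure {Real.log a, Real.log (1 - a)} with hS
  have hperiod : ∀ p ∈ S, ∀ t, h (t + p) = h t := by
    intro p hp
    refine AddSubgroup.closure_induction ?_ ?_ ?_ ?_ hp
    · rintro x (rfl | rfl)
      · exact hper_a
      · exact hper_b
    · intro t; rw [add_zero]
    · intro x y _ _ hx hy t
      rw [← add_assoc, hy, hx]
    · intro x _ hx t
      have := hx (t + -x)
      rw [add_assoc, neg_add_cancel, add_zero] at this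
      exact this.symm
  have hdense : Dense (S : Set ℝ) := by
    rcases S.dense_or_cyclic with hd | ⟨g, hg⟩
    · exact hd
    · exfalso
      have hma : Real.log a ∈ S := AddSubgroup.subset_closure (by simp)
      have hmb : Real.log (1 - a) ∈ S := AddSubgroup.subset_closure (by simp)
      rw [hg, AddSubgroup.mem_closure_singleton] at hma hmb
      obtain ⟨n, hn⟩ := hma
      obtain ⟨m, hm⟩ := hmb
      have hg0 : g ≠ 0 := by
        rintro rfl; simp at hn; exact hla hn.symm
      have hm0 : m ≠ 0 := by
        rintro rfl; simp at hm; exact hlb hm.symm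
      apply hirr
      refine ⟨(n : ℚ) / (m : ℚ), ?_⟩
      rw [zsmul_eq_mul] at hn hm
      push_cast
      rw [← hn, ← hm]
      have : (m:ℝ) ≠ 0 := Int.cast_ne_zero.mpr hm0
      field_simp
  -- h is constant equal to h 0 = 0
  have h0 : h 0 = 0 := by simp [hh]
  have hconst : ∀ t, h t = 0 := by
    intro t
    have hcl : IsClosed {t : ℝ | h t = 0} := isClosed_eq hhc continuous_const
    have hsub : (S : Set ℝ) ⊆ {t : ℝ | h t = 0} := by
      intro p hp
      have := hperiod p hp 0
      rw [zero_add, h0] at this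
      exact this
    have : closure (S : Set ℝ) ⊆ {t : ℝ | h t = 0} :=
      closure_minimal hsub hcl
    rw [hdense.closure_eq] at this
    exact this (Set.mem_univ t)
  -- conclude
  refine ⟨f 1, fun x hx => ?_⟩
  rcases eq_or_lt_of_le hx with rfl | hx'
  · have := h1 0 le_rfl
    rw [mul_zero] at this
    have hf0 : f 0 = 0 := by nlinarith
    rw [hf0, mul_zero]
  · have := hconst (Real.log x)
    simp only [hh] at this
    rw [Real.exp_log hx'] at this
    have hex : Real.exp (-Real.log x) = x⁻¹ := by
      rw [Real.exp_neg, Real.exp_log hx']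
    rw [hex] at this
    have hx0 : x ≠ 0 := ne_of_gt hx'
    field_simp at this
    linarith [this]
end

section
/- Let a ∈ (0,1) with ln a / ln(1-a) irrational, and let f : ℝ → ℝ be continuous, satisfy the bow-tie condition min(x,0) ≤ f(x) ≤ max(x,0) for all x, and satisfy f(x) = a·x for all x ≤ 0. Then f satisfies f(f(-x)+x) = f(-f(x)) + f(x) for all x ∈ ℝ if and only if there exists b ∈ [0,1] such that f(x) = b·x for all x ≥ 0. -/
theorem stmt19 (a : ℝ) (ha : a ∈ Set.Ioo (0 : ℝ) 1)
    (hirr : Irrational (Real.log a / Real.log (1 - a)))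
    (f : ℝ → ℝ) (hc : Continuous f)
    (hbt : ∀ x : ℝ, min x 0 ≤ f x ∧ f x ≤ max x 0)
    (hneg : ∀ x : ℝ, x ≤ 0 → f x = a * x) :
    (∀ x : ℝ, f (f (-x) + x) = f (-f x) + f x) ↔
      ∃ b ∈ Set.Icc (0 : ℝ) 1, ∀ x : ℝ, 0 ≤ x → f x = b * x := by
  obtain ⟨ha0, ha1⟩ := ha
  have h1a0 : (0:ℝ) < 1 - a := by linarith
  have h1a1 : 1 - a < 1 := by linarith
  have hla : Real.log a < 0 := Real.log_neg ha0 ha1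
  have hlb : Real.log (1 - a) < 0 := Real.log_neg h1a0 h1a1
  constructor
  · intro hfe
    -- key scaling identities
    have key1 : ∀ x : ℝ, 0 < x → f (a * x) = a * f x := by
      intro x hx
      have h := hfe (-x)
      rw [neg_neg] at h
      have hfx0 : 0 ≤ f x := le_trans (by simp [hx.le]) (hbt x).1
      have hfxx : f x ≤ x := le_trans (hbt x).2 (by simp [hx.le])
      rw [hneg (-x) (by linarith), hneg (f x + -x) (by linarith)] at h
      have : f (-(a * -x)) = f (a * x) := by ring_nf
      rw [this] at h
      linarith [h]
    have key2 : ∀ x : ℝ, 0 < x → f ((1 - a) * x) = (1 - a) * f x := by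
      intro x hx
      have h := hfe x
      have hfx0 : 0 ≤ f x := le_trans (by simp [hx.le]) (hbt x).1
      rw [hneg (-x) (by linarith), hneg (-f x) (by linarith)] at h
      have : f (a * -x + x) = f ((1 - a) * x) := by ring_nf
      rw [this] at h
      linarith [h]
    -- g t = f (exp t) / exp t
    set g : ℝ → ℝ := fun t => f (Real.exp t) / Real.exp t with hg
    have hgc : Continuous g := (hc.comp Real.continuous_exp).div Real.continuous_exp
      (fun t => (Real.exp_pos t).ne')
    have hper1 : ∀ t : ℝ, g (t + Real.log a) = g t := by
      intro t
      have : Real.exp (t + Real.log a) = a * Real.exp t := by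
        rw [Real.exp_add, Real.exp_log ha0]; ring
      simp only [hg, this, key1 _ (Real.exp_pos t)]
      rw [mul_div_mul_left _ _ ha0.ne']
    have hper2 : ∀ t : ℝ, g (t + Real.log (1 - a)) = g t := by
      intro t
      have : Real.exp (t + Real.log (1 - a)) = (1 - a) * Real.exp t := by
        rw [Real.exp_add, Real.exp_log h1a0]; ring
      simp only [hg, this, key2 _ (Real.exp_pos t)]
      rw [mul_div_mul_left _ _ h1a0.ne']
    -- subgroup of periods
    set P : AddSubgroup ℝ :=
      { carrier := {c | ∀ t : ℝ, g (t + c) = g t}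
        zero_mem' := by intro t; simp
        add_mem' := by
          intro c d hcp hdp t
          rw [← add_assoc, hdp (t + c), hcp t]
        neg_mem' := by
          intro c hcp t
          have := hcp (t + -c)
          rw [add_assoc, neg_add_cancel, add_zero] at this
          exact this.symm } with hP
    set S : AddSubgroup ℝ := AddSubgroup.closure {Real.log a, Real.log (1 - a)} with hS
    have hSP : S ≤ P := by
      rw [hS, AddSubgroup.closure_le]
      intro c hcs
      rcases hcs with h | h
      · exact h ▸ hper1
      · exact (Set.mem_singleton_iff.mp h) ▸ hper2
    have hdense : Dense (S : Set ℝ) := by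
      rcases S.dense_or_cyclic with h | ⟨c, hcyc⟩
      · exact h
      · exfalso
        have hmem1 : Real.log a ∈ S := AddSubgroup.subset_closure (by simp)
        have hmem2 : Real.log (1 - a) ∈ S := AddSubgroup.subset_closure (by simp)
        rw [hcyc, AddSubgroup.mem_closure_singleton] at hmem1 hmem2
        obtain ⟨m, hm⟩ := hmem1
        obtain ⟨n, hn⟩ := hmem2
        have hc0 : c ≠ 0 := by
          rintro rfl; simp at hn; linarith
        have hn0 : (n:ℝ) ≠ 0 := by
          rintro h; rw [zsmul_eq_mul, h, zero_mul] at hn; linarith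
        apply Rat.not_irrational ((m : ℚ) / (n : ℚ))
        convert hirr using 2
        rw [← hm, ← hn]
        push_cast
        field_simp
        ring
    -- conclude g constant
    have hconst : ∀ t : ℝ, g t = g 0 := by
      have hclosed : IsClosed {t : ℝ | g t = g 0} := isClosed_eq hgc continuous_const
      have hsub : (S : Set ℝ) ⊆ {t : ℝ | g t = g 0} := by
        intro s hs
        have := hSP hs 0
        simpa using this
      have : closure (S : Set ℝ) ⊆ {t : ℝ | g t = g 0} := hclosed.closure_subset_iff.mpr hsub
      rw [hdense.closure_eq] at this
      intro t; exact this (Set.mem_univ t)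
    refine ⟨f 1, ⟨?_, ?_⟩, ?_⟩
    · have := (hbt 1).1; simpa using this
    · have := (hbt 1).2; simpa using this
    · intro x hx
      rcases eq_or_lt_of_le hx with h | h
      · simp [← h, hneg 0 le_rfl]
      · have := hconst (Real.log x)
        simp only [hg, Real.exp_log h, Real.exp_zero] at this
        have hx0 : x ≠ 0 := h.ne'
        field_simp at this
        rw [this]; ring
  · rintro ⟨b, ⟨hb0, hb1⟩, hpos⟩ x
    rcases le_or_gt 0 x with hx | hx
    · rw [hneg (-x) (by linarith), hpos x hx,
        hneg (-(b * x)) (by nlinarith), show a * -x + x = (1 - a) * x by ring,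
        hpos _ (by nlinarith)]
      ring
    · rw [hneg x hx.le, hpos (-x) (by linarith),
        show b * -x + x = (1 - b) * x by ring,
        hneg _ (by nlinarith),
        show -(a * x) = a * (-x) by ring,
        hpos _ (by nlinarith)]
      ring
end
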